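/- Let n ≥ k ≥ 0, b > a > 0 be integers with k < b, and set C_j = C(n + j·a, k + j·b), where C(m, r) = 0 if r > m. Then the infinite matrix W with entries W_{i,j} = C_{j-i} (and C_s = 0 for s < 0) is totally positive: every minor of W is nonnegative. -/

import Mathlib

namespace ToeplitzTP
open Finset

/-! ### generic filter lemmas -/

lemma card_filter_lt_succ_le (S : Finset ℤ) (t : ℤ) :
    (S.filter (fun u => u < t + 1)).card ≤ (S.filter (fun u => u < t)).card + 1 := by
  have h : S.filter (fun u => u < t + 1) ⊆ insert t (S.filter (fun u => u < t)) := by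
    intro u hu
    simp only [mem_filter] at hu
    simp only [mem_insert, mem_filter]
    rcases lt_or_eq_of_le (Int.lt_add_one_iff.mp hu.2) with h | h
    · exact Or.inr ⟨hu.1, h⟩
    · exact Or.inl h
  exact le_trans (card_le_card h) (card_insert_le _ _)

lemma card_filter_lt_mono (S : Finset ℤ) {t t' : ℤ} (h : t ≤ t') :
    (S.filter (fun u => u < t)).card ≤ (S.filter (fun u => u < t')).card := by
  apply card_le_card
  apply monotone_filter_right
  intro u hu
  omega

lemma filter_lt_eq_empty {S : Finset ℤ} {l r t : ℤ} (hS : S ⊆ Finset.Ico l r) (h : t ≤ l) :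
    S.filter (fun u => u < t) = ∅ := by
  apply filter_eq_empty_iff.mpr
  intro u hu
  have := mem_Ico.mp (hS hu)
  omega

lemma filter_lt_eq_self {S : Finset ℤ} {l r t : ℤ} (hS : S ⊆ Finset.Ico l r) (h : r ≤ t) :
    S.filter (fun u => u < t) = S := by
  apply filter_true_of_mem
  intro u hu
  have := mem_Ico.mp (hS hu)
  omega

lemma card_filter_lt_le {S : Finset ℤ} {l r t : ℤ} (hS : S ⊆ Finset.Ico l r) (hl : l ≤ t) :
    ((S.filter (fun u => u < t)).card : ℤ) ≤ t - l := by
  have h : S.filter (fun u => u < t) ⊆ Finset.Ico l t := by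
    intro u hu
    simp only [mem_filter] at hu
    have := mem_Ico.mp (hS hu.1)
    simp only [mem_Ico]
    omega
  have := card_le_card h
  rw [Int.card_Ico] at this
  omega

lemma card_filter_lt_ge {S : Finset ℤ} {l r t : ℤ} (hS : S ⊆ Finset.Ico l r) (hr : t ≤ r) :
    (S.card : ℤ) - (r - t) ≤ ((S.filter (fun u => u < t)).card : ℤ) := by
  have h : S.filter (fun u => ¬ u < t) ⊆ Finset.Ico t r := by
    intro u hu
    simp only [mem_filter] at hu
    have := mem_Ico.mp (hS hu.1)
    simp only [mem_Ico]
    omega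
  have h2 := card_le_card h
  rw [Int.card_Ico] at h2
  have h3 := card_filter_add_card_filter_not (s := S) (p := fun u => u < t)
  omega

/-- Discrete intermediate value theorem. -/
lemma int_ivt (f : ℤ → ℤ) (hstep : ∀ t, f (t + 1) ≤ f t + 1) :
    ∀ (m : ℕ) (t0 : ℤ), f t0 < 0 → 0 ≤ f (t0 + m) →
      ∃ t, t0 ≤ t ∧ t ≤ t0 + m ∧ f t = 0 := by
  intro m
  induction m with
  | zero => intro t0 h0 h1; simp at h1; omega
  | succ p ih =>
    intro t0 h0 h1
    by_cases hc : 0 ≤ f (t0 + p)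
    · obtain ⟨t, ht1, ht2, ht3⟩ := ih t0 h0 hc
      exact ⟨t, ht1, by push_cast; omega, ht3⟩
    · push_neg at hc
      have hs := hstep (t0 + p)
      have he : t0 + ((p : ℤ) + 1) = (t0 + p) + 1 := by ring
      rw [show ((p + 1 : ℕ) : ℤ) = (p : ℤ) + 1 by push_cast; ring, he] at h1
      refine ⟨t0 + p + 1, by omega, by push_cast; omega, by omega⟩


variable {d : ℕ} (sA xA sB xB : Fin d → ℤ)

/-- Path sets: monotone lattice paths from `(sA i, xA i)` to `(sB j, xB j)` encoded by
their sets of "horizontal step times". -/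
noncomputable def pathSet (i j : Fin d) : Finset (Finset ℤ) :=
  if 0 ≤ xB j - xA i then (Finset.Ico (sA i) (sB j)).powersetCard (xB j - xA i).toNat else ∅

lemma mem_pathSet {S : Finset ℤ} {i j : Fin d} :
    S ∈ pathSet sA xA sB xB i j ↔
      S ⊆ Finset.Ico (sA i) (sB j) ∧ (S.card : ℤ) = xB j - xA i := by
  unfold pathSet
  split_ifs with h
  · rw [Finset.mem_powersetCard]
    constructor
    · rintro ⟨h1, h2⟩; exact ⟨h1, by omega⟩
    · rintro ⟨h1, h2⟩; exact ⟨h1, by omega⟩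
  · simp only [Finset.notMem_empty, false_iff, not_and]
    intro _ h2
    omega

/-- value (x-coordinate) of path with starting height `x0` and step set `S` at time `t` -/
def pval (x0 : ℤ) (S : Finset ℤ) (t : ℤ) : ℤ := x0 + ((S.filter (fun u => u < t)).card : ℤ)

/-- the two paths `j, j'` (with `j < j'`) cross at time `t` -/
def crossAt (σ : Equiv.Perm (Fin d)) (F : Fin d → Finset ℤ) (t : ℤ) (j j' : Fin d) : Prop :=
  j < j' ∧ sA (σ j) ≤ t ∧ t ≤ sB j ∧ sA (σ j') ≤ t ∧ t ≤ sB j' ∧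
    pval (xA (σ j)) (F j) t = pval (xA (σ j')) (F j') t

def swapPaths (F : Fin d → Finset ℤ) (t : ℤ) (j j' : Fin d) : Fin d → Finset ℤ :=
  fun v =>
    if v = j then (F j').filter (fun u => u < t) ∪ (F j).filter (fun u => ¬ u < t)
    else if v = j' then (F j).filter (fun u => u < t) ∪ (F j').filter (fun u => ¬ u < t)
    else F v

/-! basic lemmas about such unions -/

lemma filter_union_lt (A B : Finset ℤ) {t t' : ℤ} (h : t' ≤ t) :
    (A.filter (fun u => u < t) ∪ B.filter (fun u => ¬ u < t)).filter (fun u => u < t')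
      = A.filter (fun u => u < t') := by
  ext u
  simp only [mem_filter, mem_union]
  constructor
  · rintro ⟨h1 | h1, h2⟩
    · exact ⟨h1.1, h2⟩
    · omega
  · rintro ⟨h1, h2⟩
    exact ⟨Or.inl ⟨h1, by omega⟩, h2⟩

lemma filter_union_part1 (A B : Finset ℤ) (t : ℤ) :
    (A.filter (fun u => u < t) ∪ B.filter (fun u => ¬ u < t)).filter (fun u => u < t)
      = A.filter (fun u => u < t) := filter_union_lt A B le_rfl

lemma filter_union_part2 (A B : Finset ℤ) (t : ℤ) :
    (A.filter (fun u => u < t) ∪ B.filter (fun u => ¬ u < t)).filter (fun u => ¬ u < t)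
      = B.filter (fun u => ¬ u < t) := by
  ext u
  simp only [mem_filter, mem_union]
  constructor
  · rintro ⟨h1 | h1, h2⟩
    · omega
    · exact ⟨h1.1, h2⟩
  · rintro ⟨h1, h2⟩
    exact ⟨Or.inr ⟨h1, h2⟩, h2⟩

lemma swap_union_disjoint (A B : Finset ℤ) (t : ℤ) :
    Disjoint (A.filter (fun u => u < t)) (B.filter (fun u => ¬ u < t)) := by
  rw [Finset.disjoint_left]
  intro u h1 h2
  simp only [mem_filter] at h1 h2
  omega

lemma card_union_swap (A B : Finset ℤ) (t : ℤ) :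
    ((A.filter (fun u => u < t) ∪ B.filter (fun u => ¬ u < t)).card : ℤ)
      = ((A.filter (fun u => u < t)).card : ℤ) + B.card - (B.filter (fun u => u < t)).card := by
  rw [card_union_of_disjoint (swap_union_disjoint A B t)]
  have h3 := card_filter_add_card_filter_not (s := B) (p := fun u => u < t)
  push_cast
  omega

lemma card_filter_union_ge (A B : Finset ℤ) {t t' : ℤ} (h : t ≤ t') :
    (((A.filter (fun u => u < t) ∪ B.filter (fun u => ¬ u < t)).filter (fun u => u < t')).card : ℤ)
      = ((A.filter (fun u => u < t)).card : ℤ)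
        + (B.filter (fun u => u < t')).card - (B.filter (fun u => u < t)).card := by
  have e1 : (A.filter (fun u => u < t) ∪ B.filter (fun u => ¬ u < t)).filter (fun u => u < t')
      = A.filter (fun u => u < t) ∪ (B.filter (fun u => u < t')).filter (fun u => ¬ u < t) := by
    ext u
    simp only [mem_filter, mem_union]
    constructor
    · rintro ⟨h1 | h1, h2⟩
      · exact Or.inl ⟨h1.1, by omega⟩
      · exact Or.inr ⟨⟨h1.1, h2⟩, h1.2⟩
    · rintro (h1 | h1)
      · exact ⟨Or.inl h1, by omega⟩
      · exact ⟨Or.inr ⟨h1.1.1, h1.2⟩, h1.1.2⟩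
  rw [e1, card_union_of_disjoint]
  · have h3 := card_filter_add_card_filter_not (s := B.filter (fun u => u < t'))
      (p := fun u => u < t)
    have e2 : (B.filter (fun u => u < t')).filter (fun u => u < t) = B.filter (fun u => u < t) := by
      rw [filter_filter]
      apply filter_congr
      intro u _
      constructor
      · rintro ⟨_, h2⟩; exact h2
      · intro h2; exact ⟨by omega, h2⟩
    rw [e2] at h3
    push_cast
    omega
  · rw [Finset.disjoint_left]
    intro u h1 h2
    simp only [mem_filter] at h1 h2
    omega

def HasCross (σ : Equiv.Perm (Fin d)) (F : Fin d → Finset ℤ) : Prop :=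
  ∃ t j j', crossAt sA xA sB σ F t j j'

lemma cross_bdd {σ : Equiv.Perm (Fin d)} {F : Fin d → Finset ℤ}
    (h : HasCross sA xA sB σ F) :
    ∃ b : ℤ, ∀ t, (∃ j j', crossAt sA xA sB σ F t j j') → b ≤ t := by
  obtain ⟨t0, j0, j0', hc⟩ := h
  refine ⟨(Finset.univ.image sA).min' ⟨sA j0, Finset.mem_image_of_mem sA (Finset.mem_univ j0)⟩, ?_⟩
  rintro t ⟨j, j', hc'⟩
  exact le_trans (Finset.min'_le _ _ (Finset.mem_image_of_mem sA (Finset.mem_univ (σ j)))) hc'.2.1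

noncomputable def tstar (σ : Equiv.Perm (Fin d)) (F : Fin d → Finset ℤ)
    (h : HasCross sA xA sB σ F) : ℤ :=
  Classical.choose (Int.exists_least_of_bdd (cross_bdd sA xA sB h) h)

lemma tstar_cross {σ : Equiv.Perm (Fin d)} {F : Fin d → Finset ℤ}
    (h : HasCross sA xA sB σ F) :
    ∃ j j', crossAt sA xA sB σ F (tstar sA xA sB σ F h) j j' :=
  (Classical.choose_spec (Int.exists_least_of_bdd (cross_bdd sA xA sB h) h)).1

lemma tstar_min {σ : Equiv.Perm (Fin d)} {F : Fin d → Finset ℤ}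
    (h : HasCross sA xA sB σ F) {t : ℤ} (ht : ∃ j j', crossAt sA xA sB σ F t j j') :
    tstar sA xA sB σ F h ≤ t :=
  (Classical.choose_spec (Int.exists_least_of_bdd (cross_bdd sA xA sB h) h)).2 t ht

open Classical in
noncomputable def jstar (σ : Equiv.Perm (Fin d)) (F : Fin d → Finset ℤ)
    (h : HasCross sA xA sB σ F) : Fin d :=
  (Finset.univ.filter
    (fun j => ∃ j', crossAt sA xA sB σ F (tstar sA xA sB σ F h) j j')).min'
    (by obtain ⟨j, j', hc⟩ := tstar_cross sA xA sB h
        exact ⟨j, by simp only [Finset.mem_filter, Finset.mem_univ, true_and]; exact ⟨j', hc⟩⟩)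

open Classical in
lemma jstar_cross {σ : Equiv.Perm (Fin d)} {F : Fin d → Finset ℤ}
    (h : HasCross sA xA sB σ F) :
    ∃ j', crossAt sA xA sB σ F (tstar sA xA sB σ F h) (jstar sA xA sB σ F h) j' := by
  have := Finset.min'_mem (Finset.univ.filter
    (fun j => ∃ j', crossAt sA xA sB σ F (tstar sA xA sB σ F h) j j'))
    (by obtain ⟨j, j', hc⟩ := tstar_cross sA xA sB h
        exact ⟨j, by simp only [Finset.mem_filter, Finset.mem_univ, true_and]; exact ⟨j', hc⟩⟩)
  simp only [Finset.mem_filter, Finset.mem_univ, true_and] at this; exact this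

open Classical in
lemma jstar_min {σ : Equiv.Perm (Fin d)} {F : Fin d → Finset ℤ}
    (h : HasCross sA xA sB σ F) {j j' : Fin d}
    (hc : crossAt sA xA sB σ F (tstar sA xA sB σ F h) j j') :
    jstar sA xA sB σ F h ≤ j :=
  Finset.min'_le _ _ (by simp only [Finset.mem_filter, Finset.mem_univ, true_and]; exact ⟨j', hc⟩)

open Classical in
noncomputable def jstar' (σ : Equiv.Perm (Fin d)) (F : Fin d → Finset ℤ)
    (h : HasCross sA xA sB σ F) : Fin d :=
  (Finset.univ.filter
    (fun j' => crossAt sA xA sB σ F (tstar sA xA sB σ F h) (jstar sA xA sB σ F h) j')).min'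
    (by obtain ⟨j', hc⟩ := jstar_cross sA xA sB h
        exact ⟨j', by simp only [Finset.mem_filter, Finset.mem_univ, true_and]; exact hc⟩)

open Classical in
lemma jstar'_cross {σ : Equiv.Perm (Fin d)} {F : Fin d → Finset ℤ}
    (h : HasCross sA xA sB σ F) :
    crossAt sA xA sB σ F (tstar sA xA sB σ F h) (jstar sA xA sB σ F h)
      (jstar' sA xA sB σ F h) := by
  have := Finset.min'_mem (Finset.univ.filter
    (fun j' => crossAt sA xA sB σ F (tstar sA xA sB σ F h) (jstar sA xA sB σ F h) j'))
    (by obtain ⟨j', hc⟩ := jstar_cross sA xA sB h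
        exact ⟨j', by simp only [Finset.mem_filter, Finset.mem_univ, true_and]; exact hc⟩)
  simp only [Finset.mem_filter, Finset.mem_univ, true_and] at this; exact this

open Classical in
lemma jstar'_min {σ : Equiv.Perm (Fin d)} {F : Fin d → Finset ℤ}
    (h : HasCross sA xA sB σ F) {j' : Fin d}
    (hc : crossAt sA xA sB σ F (tstar sA xA sB σ F h) (jstar sA xA sB σ F h) j') :
    jstar' sA xA sB σ F h ≤ j' :=
  Finset.min'_le _ _ (by simp only [Finset.mem_filter, Finset.mem_univ, true_and]; exact hc)
lemma sel_congr {σ σ2 : Equiv.Perm (Fin d)} {F F2 : Fin d → Finset ℤ}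
    (h : HasCross sA xA sB σ F) (h2 : HasCross sA xA sB σ2 F2)
    (hT : ∀ t, t < tstar sA xA sB σ F h → ¬ ∃ u v, crossAt sA xA sB σ2 F2 t u v)
    (hiff : ∀ u v, crossAt sA xA sB σ2 F2 (tstar sA xA sB σ F h) u v ↔
      crossAt sA xA sB σ F (tstar sA xA sB σ F h) u v) :
    tstar sA xA sB σ2 F2 h2 = tstar sA xA sB σ F h ∧
      jstar sA xA sB σ2 F2 h2 = jstar sA xA sB σ F h ∧
      jstar' sA xA sB σ2 F2 h2 = jstar' sA xA sB σ F h := by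
  have h1 : tstar sA xA sB σ2 F2 h2 = tstar sA xA sB σ F h := by
    apply le_antisymm
    · apply tstar_min
      obtain ⟨u, v, hc⟩ := tstar_cross sA xA sB h
      exact ⟨u, v, (hiff u v).mpr hc⟩
    · by_contra hlt
      push_neg at hlt
      exact hT _ hlt (tstar_cross sA xA sB h2)
  have key : ∀ u v, crossAt sA xA sB σ2 F2 (tstar sA xA sB σ2 F2 h2) u v ↔
      crossAt sA xA sB σ F (tstar sA xA sB σ F h) u v := by
    rw [h1]; exact hiff
  have h2j : jstar sA xA sB σ2 F2 h2 = jstar sA xA sB σ F h := by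
    apply le_antisymm
    · obtain ⟨v, hc⟩ := jstar_cross sA xA sB h
      exact jstar_min sA xA sB h2 ((key _ _).mpr hc)
    · obtain ⟨v, hc⟩ := jstar_cross sA xA sB h2
      exact jstar_min sA xA sB h ((key _ _).mp hc)
  have h3j : jstar' sA xA sB σ2 F2 h2 = jstar' sA xA sB σ F h := by
    apply le_antisymm
    · have hc := jstar'_cross sA xA sB h
      exact jstar'_min sA xA sB h2 (by rw [h2j]; exact (key _ _).mpr hc)
    · have hc := jstar'_cross sA xA sB h2
      rw [h2j] at hc
      exact jstar'_min sA xA sB h ((key _ _).mp hc)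
  exact ⟨h1, h2j, h3j⟩
lemma swapPaths_left (F : Fin d → Finset ℤ) (t : ℤ) (j j' : Fin d) :
    swapPaths F t j j' j
      = (F j').filter (fun u => u < t) ∪ (F j).filter (fun u => ¬ u < t) := by
  simp [swapPaths]

lemma swapPaths_right (F : Fin d → Finset ℤ) (t : ℤ) {j j' : Fin d} (hne : j ≠ j') :
    swapPaths F t j j' j'
      = (F j).filter (fun u => u < t) ∪ (F j').filter (fun u => ¬ u < t) := by
  simp [swapPaths, hne.symm]

lemma swapPaths_other (F : Fin d → Finset ℤ) (t : ℤ) {j j' v : Fin d}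
    (h1 : v ≠ j) (h2 : v ≠ j') : swapPaths F t j j' v = F v := by
  simp [swapPaths, h1, h2]

section SwapLemmas

variable {σ : Equiv.Perm (Fin d)} {F : Fin d → Finset ℤ} {T : ℤ} {j j' : Fin d}

/-- prefix values of swapped paths agree with the swapped original paths -/
lemma swapPaths_filter_eq (hc : crossAt sA xA sB σ F T j j') {t : ℤ} (ht : t ≤ T)
    (v : Fin d) :
    (swapPaths F T j j' v).filter (fun u => u < t)
      = (F (Equiv.swap j j' v)).filter (fun u => u < t) := by
  have hne : j ≠ j' := ne_of_lt hc.1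
  by_cases h1 : v = j
  · subst h1
    rw [swapPaths_left, Equiv.swap_apply_left, filter_union_lt _ _ ht]
  by_cases h2 : v = j'
  · subst h2
    rw [swapPaths_right _ _ hne, Equiv.swap_apply_right, filter_union_lt _ _ ht]
  · rw [swapPaths_other _ _ h1 h2, Equiv.swap_apply_of_ne_of_ne h1 h2]

/-- the swapped family is still a family of admissible paths -/
lemma swapPaths_mem (hc : crossAt sA xA sB σ F T j j')
    (hmem : ∀ v, F v ∈ pathSet sA xA sB xB (σ v) v) (v : Fin d) :
    swapPaths F T j j' v ∈ pathSet sA xA sB xB ((σ * Equiv.swap j j') v) v := by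
  obtain ⟨hjj, haj, hbj, haj', hbj', hval⟩ := hc
  have hne : j ≠ j' := ne_of_lt hjj
  simp only [pval] at hval
  obtain ⟨hsubj, hcardj⟩ := (mem_pathSet sA xA sB xB).mp (hmem j)
  obtain ⟨hsubj', hcardj'⟩ := (mem_pathSet sA xA sB xB).mp (hmem j')
  by_cases h1 : v = j
  · subst h1
    rw [swapPaths_left, Equiv.Perm.mul_apply, Equiv.swap_apply_left,
      mem_pathSet]
    constructor
    · intro u hu
      rcases Finset.mem_union.mp hu with h | h
      · have h' := Finset.mem_filter.mp h
        have := Finset.mem_Ico.mp (hsubj' h'.1)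
        rw [Finset.mem_Ico]
        omega
      · have h' := Finset.mem_filter.mp h
        have := Finset.mem_Ico.mp (hsubj h'.1)
        rw [Finset.mem_Ico]
        omega
    · rw [card_union_swap]
      omega
  by_cases h2 : v = j'
  · subst h2
    rw [swapPaths_right _ _ hne, Equiv.Perm.mul_apply, Equiv.swap_apply_right,
      mem_pathSet]
    constructor
    · intro u hu
      rcases Finset.mem_union.mp hu with h | h
      · have h' := Finset.mem_filter.mp h
        have := Finset.mem_Ico.mp (hsubj h'.1)
        rw [Finset.mem_Ico]
        omega
      · have h' := Finset.mem_filter.mp h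
        have := Finset.mem_Ico.mp (hsubj' h'.1)
        rw [Finset.mem_Ico]
        omega
    · rw [card_union_swap]
      omega
  · rw [swapPaths_other _ _ h1 h2, Equiv.Perm.mul_apply,
      Equiv.swap_apply_of_ne_of_ne h1 h2]
    exact hmem v

/-- values at the crossing time are unchanged -/
lemma swapPaths_pval_at (hc : crossAt sA xA sB σ F T j j') (v : Fin d) :
    pval (xA ((σ * Equiv.swap j j') v)) (swapPaths F T j j' v) T
      = pval (xA (σ v)) (F v) T := by
  have hne : j ≠ j' := ne_of_lt hc.1
  have hval := hc.2.2.2.2.2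
  have hfe := swapPaths_filter_eq sA xA sB hc (le_refl T) v
  by_cases h1 : v = j
  · subst h1
    rw [Equiv.Perm.mul_apply, Equiv.swap_apply_left]
    rw [Equiv.swap_apply_left] at hfe
    simp only [pval] at hval ⊢
    rw [hfe]
    omega
  by_cases h2 : v = j'
  · subst h2
    rw [Equiv.Perm.mul_apply, Equiv.swap_apply_right]
    rw [Equiv.swap_apply_right] at hfe
    simp only [pval] at hval ⊢
    rw [hfe]
    omega
  · rw [Equiv.Perm.mul_apply, Equiv.swap_apply_of_ne_of_ne h1 h2]
    rw [Equiv.swap_apply_of_ne_of_ne h1 h2] at hfe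
    simp only [pval]
    rw [hfe]

/-- the crossing relation at time `T` is unchanged by the swap -/
lemma cross_iff_at (hc : crossAt sA xA sB σ F T j j') (u v : Fin d) :
    crossAt sA xA sB (σ * Equiv.swap j j') (swapPaths F T j j') T u v ↔
      crossAt sA xA sB σ F T u v := by
  obtain ⟨hjj, haj, hbj, haj', hbj', hval⟩ := hc
  have hc' : crossAt sA xA sB σ F T j j' := ⟨hjj, haj, hbj, haj', hbj', hval⟩
  have hA : ∀ w, (sA ((σ * Equiv.swap j j') w) ≤ T ↔ sA (σ w) ≤ T) := by
    intro w
    by_cases h1 : w = j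
    · subst h1
      rw [Equiv.Perm.mul_apply, Equiv.swap_apply_left]
      exact iff_of_true haj' haj
    by_cases h2 : w = j'
    · subst h2
      rw [Equiv.Perm.mul_apply, Equiv.swap_apply_right]
      exact iff_of_true haj haj'
    · rw [Equiv.Perm.mul_apply, Equiv.swap_apply_of_ne_of_ne h1 h2]
  have hV := swapPaths_pval_at sA xA sB hc'
  constructor
  · rintro ⟨c1, c2, c3, c4, c5, c6⟩
    exact ⟨c1, (hA u).mp c2, c3, (hA v).mp c4, c5, by rw [← hV u, ← hV v]; exact c6⟩
  · rintro ⟨c1, c2, c3, c4, c5, c6⟩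
    exact ⟨c1, (hA u).mpr c2, c3, (hA v).mpr c4, c5, by rw [hV u, hV v]; exact c6⟩

/-- the pair `(j,j')` still crosses at `T` after the swap -/
lemma cross_after_swap (hc : crossAt sA xA sB σ F T j j') :
    crossAt sA xA sB (σ * Equiv.swap j j') (swapPaths F T j j') T j j' :=
  (cross_iff_at sA xA sB hc j j').mpr hc

/-- any crossing of the swapped family at an earlier time yields a crossing of the
original family at that time -/
lemma cross_translate (hc : crossAt sA xA sB σ F T j j') {t : ℤ} (ht : t < T)
    {u v : Fin d}
    (hcs : crossAt sA xA sB (σ * Equiv.swap j j') (swapPaths F T j j') t u v) :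
    ∃ p q, crossAt sA xA sB σ F t p q := by
  obtain ⟨hjj, haj, hbj, haj', hbj', hval⟩ := hc
  have hc' : crossAt sA xA sB σ F T j j' := ⟨hjj, haj, hbj, haj', hbj', hval⟩
  obtain ⟨huv, c2, c3, c4, c5, c6⟩ := hcs
  have hfe := fun w => swapPaths_filter_eq sA xA sB hc' (le_of_lt ht) w
  -- value translation
  have hvu : pval (xA ((σ * Equiv.swap j j') u)) (swapPaths F T j j' u) t
      = pval (xA (σ (Equiv.swap j j' u))) (F (Equiv.swap j j' u)) t := by
    simp only [pval, Equiv.Perm.mul_apply]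
    rw [hfe u]
  have hvv : pval (xA ((σ * Equiv.swap j j') v)) (swapPaths F T j j' v) t
      = pval (xA (σ (Equiv.swap j j' v))) (F (Equiv.swap j j' v)) t := by
    simp only [pval, Equiv.Perm.mul_apply]
    rw [hfe v]
  rw [hvu] at c6
  rw [hvv] at c6
  -- sB bounds for swapped indices
  have hB : ∀ w, t ≤ sB w → t ≤ sB (Equiv.swap j j' w) := by
    intro w hw
    by_cases h1 : w = j
    · subst h1; rw [Equiv.swap_apply_left]; omega
    by_cases h2 : w = j'
    · subst h2; rw [Equiv.swap_apply_right]; omega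
    · rw [Equiv.swap_apply_of_ne_of_ne h1 h2]; exact hw
  set p := Equiv.swap j j' u with hp
  set q := Equiv.swap j j' v with hq
  have hpq : p ≠ q := fun h => (ne_of_lt huv) (Equiv.injective _ h)
  have hsap : sA (σ p) ≤ t := by rw [hp]; rw [Equiv.Perm.mul_apply] at c2; exact c2
  have hsaq : sA (σ q) ≤ t := by rw [hq]; rw [Equiv.Perm.mul_apply] at c4; exact c4
  have hsbp : t ≤ sB p := hB u c3
  have hsbq : t ≤ sB q := hB v c5
  rcases lt_or_gt_of_ne hpq with hlt | hgt
  · exact ⟨p, q, hlt, hsap, hsbp, hsaq, hsbq, c6⟩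
  · exact ⟨q, p, hgt, hsaq, hsbq, hsap, hsbp, c6.symm⟩

/-- swapping twice gives back the original family -/
lemma swapPaths_swapPaths (hne : j ≠ j') :
    swapPaths (swapPaths F T j j') T j j' = F := by
  funext v
  by_cases h1 : v = j
  · subst h1
    rw [swapPaths_left, swapPaths_left, swapPaths_right _ _ hne,
      filter_union_part1, filter_union_part2, Finset.filter_union_filter_not_eq]
  by_cases h2 : v = j'
  · subst h2
    rw [swapPaths_right _ _ hne, swapPaths_left, swapPaths_right _ _ hne,
      filter_union_part1, filter_union_part2, Finset.filter_union_filter_not_eq]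
  · rw [swapPaths_other _ _ h1 h2, swapPaths_other _ _ h1 h2]

end SwapLemmas
lemma perm_inversion {σ : Equiv.Perm (Fin d)} (h : σ ≠ 1) :
    ∃ j j', j < j' ∧ σ j' < σ j := by
  by_contra hcon
  push_neg at hcon
  have hsm : StrictMono (σ : Fin d → Fin d) := fun u v huv =>
    lt_of_le_of_ne (hcon u v huv) (fun he => (ne_of_lt huv) (σ.injective he))
  have hr : Set.range (σ : Fin d → Fin d) = Set.range (id : Fin d → Fin d) := by
    rw [σ.surjective.range_eq, Set.range_id]
  haveI : WellFoundedLT (Fin d) := inferInstance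
  have h2 : (σ : Fin d → Fin d) = id := (StrictMono.range_inj hsm strictMono_id).mp hr
  exact h (Equiv.ext fun x => congrFun h2 x)

lemma cross_of_inversion
    (H1 : ∀ i i' : Fin d, i < i' → sA i ≤ sA i' ∧ sA i' - sA i < xA i' - xA i)
    (H2 : ∀ p q : Fin d, p < q → sB p ≤ sB q ∧ sB q - sB p < xB q - xB p)
    (H3 : ∀ i p, 0 ≤ xB p - xA i → sA i ≤ sB p)
    {σ : Equiv.Perm (Fin d)} {F : Fin d → Finset ℤ}
    (hmem : ∀ v, F v ∈ pathSet sA xA sB xB (σ v) v)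
    {j j' : Fin d} (hjj : j < j') (hinv : σ j' < σ j) :
    ∃ t, crossAt sA xA sB σ F t j j' := by
  obtain ⟨hsubj, hcardj⟩ := (mem_pathSet sA xA sB xB).mp (hmem j)
  obtain ⟨hsubj', hcardj'⟩ := (mem_pathSet sA xA sB xB).mp (hmem j')
  obtain ⟨hA1, hA2⟩ := H1 (σ j') (σ j) hinv
  obtain ⟨hB1, hB2⟩ := H2 j j' hjj
  have hD : sA (σ j) ≤ sB j := H3 (σ j) j (by omega)
  have hD' : sA (σ j') ≤ sB j' := H3 (σ j') j' (by omega)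
  set f : ℤ → ℤ := fun t => pval (xA (σ j')) (F j') t - pval (xA (σ j)) (F j) t with hf
  have hstep : ∀ t, f (t + 1) ≤ f t + 1 := by
    intro t
    have h1 := card_filter_lt_succ_le (F j') t
    have h2 := card_filter_lt_mono (F j) (le_of_lt (lt_add_one t))
    simp only [hf, pval]
    omega
  have ht0 : f (sA (σ j)) < 0 := by
    have h1 : (F j).filter (fun u => u < sA (σ j)) = ∅ := filter_lt_eq_empty hsubj le_rfl
    have h2 := card_filter_lt_le hsubj' hA1
    simp only [hf, pval, h1, Finset.card_empty]
    omega
  have ht1 : 0 ≤ f (sB j) := by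
    have h1 : (F j).filter (fun u => u < sB j) = F j := filter_lt_eq_self hsubj le_rfl
    have h2 := card_filter_lt_ge hsubj' hB1
    simp only [hf, pval, h1]
    omega
  have hm : sA (σ j) + ((sB j - sA (σ j)).toNat : ℤ) = sB j := by omega
  obtain ⟨t, ht0', ht1', htz⟩ := int_ivt f hstep (sB j - sA (σ j)).toNat (sA (σ j)) ht0
    (by rw [hm]; exact ht1)
  rw [hm] at ht1'
  refine ⟨t, hjj, ht0', ht1', by omega, by omega, ?_⟩
  simp only [hf] at htz
  omega
theorem lgv_nonneg
    (H1 : ∀ i i' : Fin d, i < i' → sA i ≤ sA i' ∧ sA i' - sA i < xA i' - xA i)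
    (H2 : ∀ p q : Fin d, p < q → sB p ≤ sB q ∧ sB q - sB p < xB q - xB p)
    (H3 : ∀ i p, 0 ≤ xB p - xA i → sA i ≤ sB p) :
    0 ≤ Matrix.det (fun i j => ((pathSet sA xA sB xB i j).card : ℤ)) := by
  classical
  set Ω : Finset (Σ _ : Equiv.Perm (Fin d), Fin d → Finset ℤ) :=
    Finset.univ.sigma (fun σ : Equiv.Perm (Fin d) =>
      Fintype.piFinset fun v => pathSet sA xA sB xB (σ v) v) with hΩ
  have hmemΩ : ∀ x : (Σ _ : Equiv.Perm (Fin d), Fin d → Finset ℤ), x ∈ Ω ↔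
      ∀ v, x.2 v ∈ pathSet sA xA sB xB (x.1 v) v := by
    intro x
    rw [hΩ, Finset.mem_sigma]
    simp only [Finset.mem_univ, true_and, Fintype.mem_piFinset]
  have main : Matrix.det (fun i j => ((pathSet sA xA sB xB i j).card : ℤ))
      = ∑ x ∈ Ω, ((Equiv.Perm.sign x.1 : ℤˣ) : ℤ) := by
    show Matrix.det (Matrix.of fun i j => ((pathSet sA xA sB xB i j).card : ℤ)) = _
    rw [Matrix.det_apply', hΩ, Finset.sum_sigma]
    apply Finset.sum_congr rfl
    intro σ _
    dsimp only [Matrix.of_apply]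
    rw [Finset.sum_const, ← Nat.cast_prod, ← Fintype.card_piFinset, nsmul_eq_mul]
    exact mul_comm _ _
  rw [main, ← Finset.sum_filter_add_sum_filter_not Ω (fun x => HasCross sA xA sB x.1 x.2)]
  have hgmem : ∀ (x : Σ _ : Equiv.Perm (Fin d), Fin d → Finset ℤ)
      (hx : x ∈ Ω.filter (fun x => HasCross sA xA sB x.1 x.2)),
      (⟨x.1 * Equiv.swap
          (jstar sA xA sB x.1 x.2 (Finset.mem_filter.mp hx).2)
          (jstar' sA xA sB x.1 x.2 (Finset.mem_filter.mp hx).2),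
        swapPaths x.2 (tstar sA xA sB x.1 x.2 (Finset.mem_filter.mp hx).2)
          (jstar sA xA sB x.1 x.2 (Finset.mem_filter.mp hx).2)
          (jstar' sA xA sB x.1 x.2 (Finset.mem_filter.mp hx).2)⟩ :
        Σ _ : Equiv.Perm (Fin d), Fin d → Finset ℤ)
        ∈ Ω.filter (fun x => HasCross sA xA sB x.1 x.2) := by
    intro x hx
    have h := (Finset.mem_filter.mp hx).2
    have hc := jstar'_cross sA xA sB h
    have hmem := (hmemΩ x).mp (Finset.mem_filter.mp hx).1
    rw [Finset.mem_filter]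
    refine ⟨(hmemΩ _).mpr (fun v => swapPaths_mem sA xA sB xB hc hmem v), ?_⟩
    exact ⟨tstar sA xA sB x.1 x.2 h, jstar sA xA sB x.1 x.2 h,
      jstar' sA xA sB x.1 x.2 h, cross_after_swap sA xA sB hc⟩
  have hbad : (∑ x ∈ Ω.filter (fun x => HasCross sA xA sB x.1 x.2),
      ((Equiv.Perm.sign x.1 : ℤˣ) : ℤ)) = 0 := by
    refine Finset.sum_involution
      (fun x hx =>
        ⟨x.1 * Equiv.swap
            (jstar sA xA sB x.1 x.2 (Finset.mem_filter.mp hx).2)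
            (jstar' sA xA sB x.1 x.2 (Finset.mem_filter.mp hx).2),
          swapPaths x.2 (tstar sA xA sB x.1 x.2 (Finset.mem_filter.mp hx).2)
            (jstar sA xA sB x.1 x.2 (Finset.mem_filter.mp hx).2)
            (jstar' sA xA sB x.1 x.2 (Finset.mem_filter.mp hx).2)⟩)
      ?_ ?_ hgmem ?_
    -- sign cancellation
    · intro x hx
      have h := (Finset.mem_filter.mp hx).2
      have hc := jstar'_cross sA xA sB h
      have hne : jstar sA xA sB x.1 x.2 h ≠ jstar' sA xA sB x.1 x.2 h := ne_of_lt hc.1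
      have hs : Equiv.Perm.sign (x.1 * Equiv.swap (jstar sA xA sB x.1 x.2 h)
          (jstar' sA xA sB x.1 x.2 h)) = - Equiv.Perm.sign x.1 := by
        rw [Equiv.Perm.sign_mul, Equiv.Perm.sign_swap hne, mul_neg_one]
      show ((Equiv.Perm.sign x.1 : ℤˣ) : ℤ) + ((Equiv.Perm.sign (x.1 * Equiv.swap
        (jstar sA xA sB x.1 x.2 h) (jstar' sA xA sB x.1 x.2 h)) : ℤˣ) : ℤ) = 0
      rw [hs]
      push_cast
      ring
    -- g x ≠ x
    · intro x hx _
      have h := (Finset.mem_filter.mp hx).2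
      have hc := jstar'_cross sA xA sB h
      intro heq
      have h1 := congrArg Sigma.fst heq
      simp only at h1
      have h2 := congrArg (fun τ : Equiv.Perm (Fin d) => τ (jstar sA xA sB x.1 x.2 h)) h1
      simp only [Equiv.Perm.mul_apply, Equiv.swap_apply_left] at h2
      exact (ne_of_lt hc.1).symm (x.1.injective h2)
    -- involution
    · intro x hx
      have h := (Finset.mem_filter.mp hx).2
      have hc := jstar'_cross sA xA sB h
      have hne : jstar sA xA sB x.1 x.2 h ≠ jstar' sA xA sB x.1 x.2 h := ne_of_lt hc.1
      have h2 : HasCross sA xA sB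
          (x.1 * Equiv.swap (jstar sA xA sB x.1 x.2 h) (jstar' sA xA sB x.1 x.2 h))
          (swapPaths x.2 (tstar sA xA sB x.1 x.2 h) (jstar sA xA sB x.1 x.2 h)
            (jstar' sA xA sB x.1 x.2 h)) :=
        ⟨tstar sA xA sB x.1 x.2 h, jstar sA xA sB x.1 x.2 h,
          jstar' sA xA sB x.1 x.2 h, cross_after_swap sA xA sB hc⟩
      have hsel := sel_congr sA xA sB h h2
        (by
          rintro t hlt ⟨u, v, hcs⟩
          obtain ⟨p, q, hpq⟩ := cross_translate sA xA sB hc hlt hcs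
          exact absurd (tstar_min sA xA sB h ⟨p, q, hpq⟩) (not_le.mpr hlt))
        (fun u v => cross_iff_at sA xA sB hc u v)
      dsimp only
      rw [Sigma.ext_iff]
      constructor
      · show x.1 * Equiv.swap (jstar sA xA sB x.1 x.2 h) (jstar' sA xA sB x.1 x.2 h)
            * Equiv.swap (jstar sA xA sB _ _ _) (jstar' sA xA sB _ _ _) = x.1
        rw [hsel.2.1, hsel.2.2, mul_assoc, Equiv.swap_mul_self, mul_one]
      · apply heq_of_eq
        show swapPaths (swapPaths x.2 (tstar sA xA sB x.1 x.2 h) _ _)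
            (tstar sA xA sB _ _ _) (jstar sA xA sB _ _ _) (jstar' sA xA sB _ _ _) = x.2
        rw [hsel.1, hsel.2.1, hsel.2.2, swapPaths_swapPaths hne]
  rw [hbad, zero_add]
  apply Finset.sum_nonneg
  intro x hx
  rw [Finset.mem_filter] at hx
  have hid : x.1 = 1 := by
    by_contra hne
    obtain ⟨j, j', hjj, hinv⟩ := perm_inversion hne
    obtain ⟨t, hcr⟩ := cross_of_inversion sA xA sB xB H1 H2 H3 ((hmemΩ x).mp hx.1) hjj hinv
    exact hx.2 ⟨t, j, j', hcr⟩
  rw [hid]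
  simp
end ToeplitzTP

/-- The Toeplitz matrix of the sequence `C_j = (n+ja).choose (k+jb)` (with `C_s = 0` for
`s < 0`) is totally positive: every minor (rows `r`, columns `c`, chosen increasingly)
has nonnegative determinant. -/
theorem toeplitz_totally_positive (n k a b : ℕ) (hkn : k ≤ n) (hab : a < b) (ha : 0 < a)
    (hkb : k < b) :
    ∀ (d : ℕ) (r c : Fin d → ℕ), StrictMono r → StrictMono c →
      0 ≤ Matrix.det (fun i j : Fin d =>
        (if (r i : ℤ) ≤ (c j : ℤ) then
          ((n + ((c j : ℤ) - r i).toNat * a).choose (k + ((c j : ℤ) - r i).toNat * b) : ℤ)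
        else 0)) := by
  intro d r c hr hc
  set sA : Fin d → ℤ := fun i => (r i : ℤ) * a with hsA
  set xA : Fin d → ℤ := fun i => (r i : ℤ) * b with hxA
  set sB : Fin d → ℤ := fun j => (n : ℤ) + (c j : ℤ) * a with hsB
  set xB : Fin d → ℤ := fun j => (k : ℤ) + (c j : ℤ) * b with hxB
  have hb0 : (0:ℤ) < b := by exact_mod_cast lt_of_le_of_lt (Nat.zero_le a) hab
  have ha0 : (0:ℤ) < a := by exact_mod_cast ha
  have hab' : (a:ℤ) < b := by exact_mod_cast hab
  have H1 : ∀ i i' : Fin d, i < i' → sA i ≤ sA i' ∧ sA i' - sA i < xA i' - xA i := by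
    intro i i' hii
    have hri : (r i : ℤ) < r i' := by exact_mod_cast hr hii
    constructor
    · simp only [hsA]
      nlinarith
    · simp only [hsA, hxA]
      nlinarith [mul_pos (show (0:ℤ) < (r i' : ℤ) - r i by omega)
        (show (0:ℤ) < (b:ℤ) - a by omega)]
  have H2 : ∀ p q : Fin d, p < q → sB p ≤ sB q ∧ sB q - sB p < xB q - xB p := by
    intro p q hpq
    have hcp : (c p : ℤ) < c q := by exact_mod_cast hc hpq
    constructor
    · simp only [hsB]
      nlinarith
    · simp only [hsB, hxB]
      nlinarith [mul_pos (show (0:ℤ) < (c q : ℤ) - c p by omega)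
        (show (0:ℤ) < (b:ℤ) - a by omega)]
  have H3 : ∀ i p : Fin d, 0 ≤ xB p - xA i → sA i ≤ sB p := by
    intro i p h
    simp only [hsB, hxB, hsA, hxA] at *
    have hrc : (r i : ℤ) ≤ c p := by
      by_contra hlt
      push_neg at hlt
      nlinarith [mul_le_mul_of_nonneg_right (show (c p : ℤ) - r i ≤ -1 by omega)
        (le_of_lt hb0)]
    nlinarith [mul_nonneg (show (0:ℤ) ≤ (c p : ℤ) - r i by omega) (le_of_lt ha0)]
  have key := ToeplitzTP.lgv_nonneg sA xA sB xB H1 H2 H3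
  have hmat : (fun i j : Fin d =>
        (if (r i : ℤ) ≤ (c j : ℤ) then
          ((n + ((c j : ℤ) - r i).toNat * a).choose (k + ((c j : ℤ) - r i).toNat * b) : ℤ)
        else 0))
      = (fun i j : Fin d => (((ToeplitzTP.pathSet sA xA sB xB i j).card : ℤ))) := by
    funext i j
    by_cases hij : (r i : ℤ) ≤ (c j : ℤ)
    · rw [if_pos hij]
      set m : ℕ := ((c j : ℤ) - r i).toNat with hm'
      have hm : (c j : ℤ) - r i = m := by omega
      have h0 : 0 ≤ xB j - xA i := by
        simp only [hxB, hxA]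
        have : (k:ℤ) + (c j) * b - (r i) * b = k + ((c j : ℤ) - r i) * b := by ring
        rw [this, hm]
        positivity
      have e1 : sB j - sA i = ((n + m * a : ℕ) : ℤ) := by
        simp only [hsB, hsA]
        push_cast
        rw [← hm]
        ring
      have e2 : xB j - xA i = ((k + m * b : ℕ) : ℤ) := by
        simp only [hxB, hxA]
        push_cast
        rw [← hm]
        ring
      rw [ToeplitzTP.pathSet, if_pos h0, Finset.card_powersetCard, Int.card_Ico]
      have e3 : (sB j - sA i).toNat = n + m * a := by omega
      have e4 : (xB j - xA i).toNat = k + m * b := by omega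
      rw [e3, e4]
    · rw [if_neg hij]
      push_neg at hij
      have h0 : ¬ (0 ≤ xB j - xA i) := by
        simp only [hxB, hxA]
        have h1 := mul_le_mul_of_nonneg_right (show (c j : ℤ) - r i ≤ -1 by omega)
          (le_of_lt hb0)
        push_neg
        nlinarith
      rw [ToeplitzTP.pathSet, if_neg h0]
      simp
  rw [hmat]
  exact key
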